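/- Let U_s be the repulsive Coulomb potential on ℝ^{3M} with singular set S and minimal nonzero coefficient m. Let (μ_n) be a sequence of finite nonnegative Borel measures on ℝ^{3M} converging weakly to a finite nonnegative Borel measure μ (i.e. ∫ f dμ_n → ∫ f dμ for every bounded continuous f : ℝ^{3M} → ℝ), and suppose there is a constant C with ∫_{ℝ^{3M}} U_s(x)² dμ_n(x) ≤ C for all n. Then for every δ > 0, μ({x : dist(x,S) ≤ δ}) ≤ (16/m²) · C · δ², and consequently μ(S) = 0. -/

import Mathlib

open MeasureTheory Filter
open scoped ENNReal

/-- The difference `R_α − R_β ∈ ℝ³` of the nuclear positions encoded in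
`x = (R_1, …, R_M) ∈ ℝ^{3M}`. -/
noncomputable def Rdiff (M : ℕ) (x : EuclideanSpace ℝ (Fin M × Fin 3)) (α β : Fin M) :
    EuclideanSpace ℝ (Fin 3) := WithLp.toLp 2 (fun j => x (α, j) - x (β, j))

/-- The repulsive Coulomb potential `U_s(x) = Σ_{α<β} C_{αβ}/|R_α−R_β|`, with
values in `[0,∞]` (equal to `+∞` exactly on the singular set). -/
noncomputable def coulombUsE (M : ℕ) (C : Fin M → Fin M → ℝ)
    (x : EuclideanSpace ℝ (Fin M × Fin 3)) : ℝ≥0∞ :=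
  ∑ q ∈ Finset.univ.filter (fun q : Fin M × Fin M => q.1 < q.2),
    ENNReal.ofReal (C q.1 q.2) / ENNReal.ofReal ‖Rdiff M x q.1 q.2‖

/-- The singular set `S = {x : R_α = R_β for some α<β with C_{αβ} > 0}`. -/
def singSet (M : ℕ) (C : Fin M → Fin M → ℝ) : Set (EuclideanSpace ℝ (Fin M × Fin 3)) :=
  {x | ∃ α β : Fin M, α < β ∧ 0 < C α β ∧ Rdiff M x α β = 0}

lemma norm_Rdiff_le (M : ℕ) (z : EuclideanSpace ℝ (Fin M × Fin 3)) (α β : Fin M) :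
    ‖Rdiff M z α β‖ ≤ 2 * ‖z‖ := by
  have hz : ‖z‖ = Real.sqrt (∑ p : Fin M × Fin 3, z p ^ 2) := by
    rw [EuclideanSpace.norm_eq]
    congr 1
    refine Finset.sum_congr rfl fun p _ => by simp [Real.norm_eq_abs, sq_abs]
  have hr : ‖Rdiff M z α β‖ = Real.sqrt (∑ j : Fin 3, (z (α, j) - z (β, j)) ^ 2) := by
    rw [EuclideanSpace.norm_eq]
    congr 1
    refine Finset.sum_congr rfl fun j _ => by simp [Rdiff, Real.norm_eq_abs, sq_abs]
  have hsub : ∀ γ : Fin M, (∑ j : Fin 3, z (γ, j) ^ 2) ≤ ∑ p : Fin M × Fin 3, z p ^ 2 := by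
    intro γ
    have h : (∑ j : Fin 3, z (γ, j) ^ 2)
        = ∑ p ∈ Finset.univ.map ⟨fun j : Fin 3 => (γ, j), fun a b h => by simpa using h⟩,
            z p ^ 2 :=
      (Finset.sum_map Finset.univ ⟨fun j : Fin 3 => (γ, j), fun a b h => by simpa using h⟩
        (fun p => z p ^ 2)).symm
    rw [h]
    exact Finset.sum_le_sum_of_subset_of_nonneg (Finset.subset_univ _) fun p _ _ => sq_nonneg _
  have hsum : (∑ j : Fin 3, (z (α, j) - z (β, j)) ^ 2) ≤ 4 * ∑ p : Fin M × Fin 3, z p ^ 2 := by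
    have h1 : (∑ j : Fin 3, (z (α, j) - z (β, j)) ^ 2)
        ≤ ∑ j : Fin 3, (2 * z (α, j) ^ 2 + 2 * z (β, j) ^ 2) :=
      Finset.sum_le_sum fun j _ => by nlinarith [sq_nonneg (z (α, j) + z (β, j))]
    have h2 : (∑ j : Fin 3, (2 * z (α, j) ^ 2 + 2 * z (β, j) ^ 2))
        = 2 * (∑ j : Fin 3, z (α, j) ^ 2) + 2 * (∑ j : Fin 3, z (β, j) ^ 2) := by
      rw [Finset.sum_add_distrib, Finset.mul_sum, Finset.mul_sum]
    have := hsub α; have := hsub β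
    linarith
  rw [hr, hz]
  calc Real.sqrt (∑ j : Fin 3, (z (α, j) - z (β, j)) ^ 2)
      ≤ Real.sqrt (4 * ∑ p : Fin M × Fin 3, z p ^ 2) := Real.sqrt_le_sqrt hsum
    _ = 2 * Real.sqrt (∑ p : Fin M × Fin 3, z p ^ 2) := by
        rw [show (4 : ℝ) = 2 ^ 2 by norm_num, Real.sqrt_mul (by positivity),
          Real.sqrt_sq (by norm_num)]

lemma rdiff_continuous (M : ℕ) (α β : Fin M) :
    Continuous fun x : EuclideanSpace ℝ (Fin M × Fin 3) => Rdiff M x α β := by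
  unfold Rdiff
  apply (PiLp.continuous_toLp 2 _).comp
  apply continuous_pi
  intro j
  exact (PiLp.continuous_apply 2 _ (α, j)).sub (PiLp.continuous_apply 2 _ (β, j))

theorem coulomb_no_concentration (M : ℕ) (hM : 2 ≤ M) (C : Fin M → Fin M → ℝ)
    (hC : ∀ α β : Fin M, 0 ≤ C α β)
    (hne : ∃ α β : Fin M, α < β ∧ 0 < C α β)
    (m : ℝ) (hm : 0 < m)
    (hmle : ∀ α β : Fin M, α < β → 0 < C α β → m ≤ C α β)
    (μseq : ℕ → Measure (EuclideanSpace ℝ (Fin M × Fin 3)))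
    (μ : Measure (EuclideanSpace ℝ (Fin M × Fin 3)))
    [∀ n, IsFiniteMeasure (μseq n)] [IsFiniteMeasure μ]
    (hweak : ∀ f : BoundedContinuousFunction (EuclideanSpace ℝ (Fin M × Fin 3)) ℝ,
      Tendsto (fun n => ∫ x, f x ∂(μseq n)) atTop (nhds (∫ x, f x ∂μ)))
    (C₀ : ℝ)
    (hC₀ : ∀ n, ∫⁻ x, (coulombUsE M C x) ^ 2 ∂(μseq n) ≤ ENNReal.ofReal C₀) :
    (∀ δ > 0, μ {x | Metric.infDist x (singSet M C) ≤ δ} ≤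
        ENNReal.ofReal ((16 / m ^ 2) * C₀ * δ ^ 2)) ∧
      μ (singSet M C) = 0 := by
  set X := EuclideanSpace ℝ (Fin M × Fin 3)
  set S := singSet M C with hS
  set K : ℝ := 16 / m ^ 2 with hK
  set C₀' : ℝ := max C₀ 0 with hC₀'def
  have hK0 : 0 < K := by positivity
  have hC₀'0 : 0 ≤ C₀' := le_max_right _ _
  have hSne : S.Nonempty := by
    obtain ⟨α, β, hab, hc⟩ := hne
    exact ⟨0, α, β, hab, hc, by ext j; simp [Rdiff]⟩
  -- pointwise lower bound on the potential near S
  have hpt : ∀ δ' : ℝ, 0 < δ' → ∀ x : X, Metric.infDist x S ≤ δ' →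
      ENNReal.ofReal (m / (4 * δ')) ≤ coulombUsE M C x := by
    intro δ' hδ' x hx
    obtain ⟨y, hyS, hxy⟩ := (Metric.infDist_lt_iff hSne).mp
      (lt_of_le_of_lt hx (by linarith : δ' < 2 * δ'))
    obtain ⟨α, β, hab, hcab, hR0⟩ := hyS
    have hxmy : Rdiff M x α β = Rdiff M (x - y) α β := by
      ext j
      have h0 : Rdiff M y α β j = 0 := by rw [hR0]; rfl
      simp only [Rdiff, WithLp.ofLp_toLp] at h0 ⊢
      have e1 : (x - y) (α, j) = x (α, j) - y (α, j) := rfl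
      have e2 : (x - y) (β, j) = x (β, j) - y (β, j) := rfl
      rw [e1, e2]; linarith
    have hlt : ‖Rdiff M x α β‖ < 4 * δ' := by
      calc ‖Rdiff M x α β‖ = ‖Rdiff M (x - y) α β‖ := by rw [hxmy]
        _ ≤ 2 * ‖x - y‖ := norm_Rdiff_le M (x - y) α β
        _ = 2 * dist x y := by rw [dist_eq_norm]
        _ < 4 * δ' := by linarith
    have hterm : ENNReal.ofReal (m / (4 * δ'))
        ≤ ENNReal.ofReal (C α β) / ENNReal.ofReal ‖Rdiff M x α β‖ := by
      rw [ENNReal.ofReal_div_of_pos (by positivity)]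
      exact ENNReal.div_le_div (ENNReal.ofReal_le_ofReal (hmle α β hab hcab))
        (ENNReal.ofReal_le_ofReal hlt.le)
    refine le_trans hterm ?_
    unfold coulombUsE
    exact Finset.single_le_sum (a := (α, β))
      (f := fun q : Fin M × Fin M => ENNReal.ofReal (C q.1 q.2) / ENNReal.ofReal ‖Rdiff M x q.1 q.2‖)
      (fun q _ => zero_le) (by simp [hab])
  have hU : Measurable (coulombUsE M C) := by
    unfold coulombUsE
    apply Finset.measurable_sum
    intro q _
    exact Measurable.div measurable_const
      (ENNReal.measurable_ofReal.comp ((rdiff_continuous M q.1 q.2).norm.measurable))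
  -- Chebyshev bound for each μseq n
  have cheb : ∀ δ' : ℝ, 0 < δ' → ∀ n,
      μseq n {x | Metric.infDist x S ≤ δ'} ≤ ENNReal.ofReal (K * C₀' * δ' ^ 2) := by
    intro δ' hδ' n
    set a : ℝ := m / (4 * δ') with ha
    have ha0 : 0 < a := by positivity
    have hsub : {x : X | Metric.infDist x S ≤ δ'}
        ⊆ {x : X | ENNReal.ofReal a ^ 2 ≤ coulombUsE M C x ^ 2} := by
      intro x hx
      exact pow_le_pow_left₀ zero_le (hpt δ' hδ' x hx) 2
    have key := mul_meas_ge_le_lintegral₀ (μ := μseq n)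
      ((hU.pow_const 2).aemeasurable) (ENNReal.ofReal a ^ 2)
    have h1 : ENNReal.ofReal a ^ 2 * μseq n {x | Metric.infDist x S ≤ δ'}
        ≤ ENNReal.ofReal C₀' :=
      le_trans (mul_le_mul_right (measure_mono hsub) _)
        (le_trans key (le_trans (hC₀ n) (ENNReal.ofReal_le_ofReal (le_max_left _ _))))
    have hpos : 0 < ENNReal.ofReal a := ENNReal.ofReal_pos.mpr ha0
    have h2 : μseq n {x | Metric.infDist x S ≤ δ'}
        ≤ ENNReal.ofReal C₀' / ENNReal.ofReal a ^ 2 :=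
      (ENNReal.le_div_iff_mul_le (Or.inl (pow_ne_zero 2 hpos.ne'))
        (Or.inl (ENNReal.pow_ne_top ENNReal.ofReal_ne_top))).mpr (by rwa [mul_comm])
    have h3 : ENNReal.ofReal C₀' / ENNReal.ofReal a ^ 2 = ENNReal.ofReal (K * C₀' * δ' ^ 2) := by
      rw [← ENNReal.ofReal_pow ha0.le, ← ENNReal.ofReal_div_of_pos (by positivity)]
      congr 1
      rw [ha, hK]
      field_simp
      ring
    rwa [h3] at h2
  -- closedness
  have hFm : ∀ r : ℝ, MeasurableSet {x : X | Metric.infDist x S ≤ r} := fun r =>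
    (isClosed_le (Metric.continuous_infDist_pt S) continuous_const).measurableSet
  -- main bound for the limit measure
  have main : ∀ δ : ℝ, 0 < δ → μ {x | Metric.infDist x S ≤ δ} ≤ ENNReal.ofReal (K * C₀' * δ ^ 2) := by
    intro δ hδ
    have hbound : ∀ δ' ∈ Set.Ioi δ, μ {x | Metric.infDist x S ≤ δ}
        ≤ ENNReal.ofReal (K * C₀' * δ' ^ 2) := by
      intro δ' hδ'
      have hδδ' : δ < δ' := hδ'
      have hδ'0 : 0 < δ' := lt_trans hδ hδδ'
      have hc : 0 < δ' - δ := by linarith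
      set g : X → ℝ := fun x => max 0 (min 1 ((δ' - Metric.infDist x S) / (δ' - δ))) with hg
      have hgc : Continuous g :=
        continuous_const.max (continuous_const.min
          ((continuous_const.sub (Metric.continuous_infDist_pt S)).div_const _))
      have hg0 : ∀ x, 0 ≤ g x := fun x => le_max_left _ _
      have hg1 : ∀ x, g x ≤ 1 := fun x => max_le zero_le_one (min_le_left _ _)
      set f : BoundedContinuousFunction X ℝ :=
        BoundedContinuousFunction.ofNormedAddCommGroup g hgc 1
          (fun x => by rw [Real.norm_eq_abs, abs_of_nonneg (hg0 x)]; exact hg1 x) with hf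
      have hfg : ∀ x, f x = g x := fun x => rfl
      have honF : ∀ x ∈ {x : X | Metric.infDist x S ≤ δ}, g x = 1 := by
        intro x hx
        have hx' : Metric.infDist x S ≤ δ := hx
        have ht : (1 : ℝ) ≤ (δ' - Metric.infDist x S) / (δ' - δ) := by
          rw [le_div_iff₀ hc]; linarith
        rw [hg]
        simp only [min_eq_left ht, max_eq_right zero_le_one]
      have hle_ind : ∀ x, g x ≤
          Set.indicator {x : X | Metric.infDist x S ≤ δ'} (fun _ => (1 : ℝ)) x := by
        intro x
        by_cases hx : x ∈ {x : X | Metric.infDist x S ≤ δ'}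
        · rw [Set.indicator_of_mem hx]; exact hg1 x
        · rw [Set.indicator_of_notMem hx]
          have hx' : δ' < Metric.infDist x S := by
            simpa [not_le] using hx
          have ht : (δ' - Metric.infDist x S) / (δ' - δ) < 0 :=
            div_neg_of_neg_of_pos (by linarith) hc
          have hmin : min 1 ((δ' - Metric.infDist x S) / (δ' - δ)) ≤ 0 :=
            le_trans (min_le_right _ _) ht.le
          rw [hg]
          exact le_of_eq (max_eq_left hmin)
      have step1 : μ {x | Metric.infDist x S ≤ δ} ≤ ∫⁻ x, ENNReal.ofReal (g x) ∂μ := by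
        calc μ {x | Metric.infDist x S ≤ δ}
            = ∫⁻ _ in {x | Metric.infDist x S ≤ δ}, 1 ∂μ := (setLIntegral_one _).symm
          _ ≤ ∫⁻ x in {x | Metric.infDist x S ≤ δ}, ENNReal.ofReal (g x) ∂μ :=
              setLIntegral_mono (ENNReal.measurable_ofReal.comp hgc.measurable)
                (fun x hx => by rw [honF x hx]; simp)
          _ ≤ ∫⁻ x, ENNReal.ofReal (g x) ∂μ := setLIntegral_le_lintegral _ _
      have hint : Integrable g μ := f.integrable μ
      have step2 : ∫⁻ x, ENNReal.ofReal (g x) ∂μ = ENNReal.ofReal (∫ x, g x ∂μ) :=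
        (ofReal_integral_eq_lintegral_ofReal hint (ae_of_all _ hg0)).symm
      have hKd : 0 ≤ K * C₀' * δ' ^ 2 :=
        mul_nonneg (mul_nonneg hK0.le hC₀'0) (sq_nonneg _)
      have step3 : ∫ x, g x ∂μ ≤ K * C₀' * δ' ^ 2 := by
        refine le_of_tendsto (hweak f) (Eventually.of_forall fun n => ?_)
        have i1 : ∫ x, f x ∂(μseq n)
            ≤ ∫ x, Set.indicator {x : X | Metric.infDist x S ≤ δ'} (fun _ => (1 : ℝ)) x ∂(μseq n) :=
          integral_mono (f.integrable _) ((integrable_const (1 : ℝ)).indicator (hFm δ')) hle_ind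
        have i2 : ∫ x, Set.indicator {x : X | Metric.infDist x S ≤ δ'} (fun _ => (1 : ℝ)) x ∂(μseq n)
            = (μseq n {x | Metric.infDist x S ≤ δ'}).toReal := by
          rw [integral_indicator (hFm δ'), setIntegral_const, smul_eq_mul, mul_one, measureReal_def]
        have i3 : (μseq n {x | Metric.infDist x S ≤ δ'}).toReal ≤ K * C₀' * δ' ^ 2 := by
          calc (μseq n {x | Metric.infDist x S ≤ δ'}).toReal
              ≤ (ENNReal.ofReal (K * C₀' * δ' ^ 2)).toReal :=
                ENNReal.toReal_mono ENNReal.ofReal_ne_top (cheb δ' hδ'0 n)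
            _ = K * C₀' * δ' ^ 2 := ENNReal.toReal_ofReal hKd
        calc ∫ x, f x ∂(μseq n) ≤ _ := i1
          _ = _ := i2
          _ ≤ _ := i3
      calc μ {x | Metric.infDist x S ≤ δ} ≤ ∫⁻ x, ENNReal.ofReal (g x) ∂μ := step1
        _ = ENNReal.ofReal (∫ x, g x ∂μ) := step2
        _ ≤ ENNReal.ofReal (K * C₀' * δ' ^ 2) := ENNReal.ofReal_le_ofReal step3
    have hten : Tendsto (fun δ' : ℝ => ENNReal.ofReal (K * C₀' * δ' ^ 2))
        (nhdsWithin δ (Set.Ioi δ)) (nhds (ENNReal.ofReal (K * C₀' * δ ^ 2))) := by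
      have hcont : Continuous fun δ' : ℝ => ENNReal.ofReal (K * C₀' * δ' ^ 2) :=
        ENNReal.continuous_ofReal.comp (continuous_const.mul (continuous_pow 2))
      exact (hcont.tendsto δ).mono_left nhdsWithin_le_nhds
    exact ge_of_tendsto hten (eventually_mem_nhdsWithin.mono hbound)
  -- convert the constant
  have conv : ∀ δ : ℝ, ENNReal.ofReal (K * C₀' * δ ^ 2)
      = ENNReal.ofReal ((16 / m ^ 2) * C₀ * δ ^ 2) := by
    intro δ
    rcases le_total 0 C₀ with h | h
    · rw [hC₀'def, max_eq_left h, hK]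
    · have h1 : K * C₀' * δ ^ 2 = 0 := by
        rw [hC₀'def, max_eq_right h]; ring
      have h2 : (16 / m ^ 2) * C₀ * δ ^ 2 ≤ 0 :=
        mul_nonpos_of_nonpos_of_nonneg
          (mul_nonpos_of_nonneg_of_nonpos (by positivity) h) (sq_nonneg _)
      rw [h1, ENNReal.ofReal_zero, eq_comm, ENNReal.ofReal_eq_zero]
      exact h2
  constructor
  · intro δ hδ
    rw [← conv δ]
    exact main δ hδ
  · have hsub : ∀ δ' : ℝ, 0 < δ' → S ⊆ {x : X | Metric.infDist x S ≤ δ'} := by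
      intro δ' hδ' x hx
      have : Metric.infDist x S = 0 := Metric.infDist_zero_of_mem hx
      show Metric.infDist x S ≤ δ'
      rw [this]
      exact hδ'.le
    have hb : ∀ δ' ∈ Set.Ioi (0 : ℝ), μ S ≤ ENNReal.ofReal (K * C₀' * δ' ^ 2) := by
      intro δ' hδ'
      exact (measure_mono (hsub δ' hδ')).trans (main δ' hδ')
    have hten0 : Tendsto (fun δ' : ℝ => ENNReal.ofReal (K * C₀' * δ' ^ 2))
        (nhdsWithin 0 (Set.Ioi 0)) (nhds (ENNReal.ofReal (K * C₀' * 0 ^ 2))) := by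
      have hcont : Continuous fun δ' : ℝ => ENNReal.ofReal (K * C₀' * δ' ^ 2) :=
        ENNReal.continuous_ofReal.comp (continuous_const.mul (continuous_pow 2))
      exact (hcont.tendsto 0).mono_left nhdsWithin_le_nhds
    have hle : μ S ≤ ENNReal.ofReal (K * C₀' * 0 ^ 2) :=
      ge_of_tendsto hten0 (eventually_mem_nhdsWithin.mono hb)
    simpa using hle
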